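/- Let a₂, a₁, b₂, b₁ be real numbers and n ≥ 1 an integer. Then for every twice differentiable function p : ℝ → ℝ and every real x, writing y(x) = x·p(x), one has x²(a₂x + a₁)y''(x) + x(b₂x + b₁)y'(x) − (n(b₂ + (n−1)a₂)x + b₁)y(x) = x²·[(a₂x² + a₁x)p''(x) + ((2a₂ + b₂)x + 2a₁ + b₁)p'(x) − (n−1)(na₂ + b₂)p(x)]. In particular, if p satisfies the classical hypergeometric-type equation (a₂x² + a₁x)p'' + ((2a₂+b₂)x + 2a₁+b₁)p' − (n−1)(na₂+b₂)p = 0 on ℝ, then y(x) = x·p(x) satisfies x²(a₂x + a₁)y'' + x(b₂x + b₁)y' − (n(b₂+(n−1)a₂)x + b₁)y = 0 on ℝ, and conversely for all x ≠ 0 (hence for all x if p is twice continuously differentiable). -/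

import Mathlib

/-- Factorization `y = x·p` reducing the exceptional X₁ equation
`x²(a₂x+a₁)y'' + x(b₂x+b₁)y' − (n(b₂+(n−1)a₂)x + b₁)y = 0` to a classical
hypergeometric-type equation for `p`, together with both implications. -/
theorem x1_factorization_times_x
    (a2 a1 b2 b1 : ℝ) (n : ℕ) (hn : 1 ≤ n)
    (p : ℝ → ℝ) (hp : Differentiable ℝ p) (hp' : Differentiable ℝ (deriv p)) :
    (∀ x : ℝ,
      x ^ 2 * (a2 * x + a1) * deriv (deriv (fun t => t * p t)) x
        + x * (b2 * x + b1) * deriv (fun t => t * p t) x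
        - ((n : ℝ) * (b2 + ((n : ℝ) - 1) * a2) * x + b1) * (x * p x)
      = x ^ 2 * ((a2 * x ^ 2 + a1 * x) * deriv (deriv p) x
          + ((2 * a2 + b2) * x + 2 * a1 + b1) * deriv p x
          - ((n : ℝ) - 1) * ((n : ℝ) * a2 + b2) * p x)) ∧
    ((∀ x : ℝ,
        (a2 * x ^ 2 + a1 * x) * deriv (deriv p) x
          + ((2 * a2 + b2) * x + 2 * a1 + b1) * deriv p x
          - ((n : ℝ) - 1) * ((n : ℝ) * a2 + b2) * p x = 0) →
      ∀ x : ℝ,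
        x ^ 2 * (a2 * x + a1) * deriv (deriv (fun t => t * p t)) x
          + x * (b2 * x + b1) * deriv (fun t => t * p t) x
          - ((n : ℝ) * (b2 + ((n : ℝ) - 1) * a2) * x + b1) * (x * p x) = 0) ∧
    ((∀ x : ℝ,
        x ^ 2 * (a2 * x + a1) * deriv (deriv (fun t => t * p t)) x
          + x * (b2 * x + b1) * deriv (fun t => t * p t) x
          - ((n : ℝ) * (b2 + ((n : ℝ) - 1) * a2) * x + b1) * (x * p x) = 0) →
      ∀ x : ℝ, x ≠ 0 →
        (a2 * x ^ 2 + a1 * x) * deriv (deriv p) x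
          + ((2 * a2 + b2) * x + 2 * a1 + b1) * deriv p x
          - ((n : ℝ) - 1) * ((n : ℝ) * a2 + b2) * p x = 0) ∧
    (Continuous (deriv (deriv p)) →
      (∀ x : ℝ,
        x ^ 2 * (a2 * x + a1) * deriv (deriv (fun t => t * p t)) x
          + x * (b2 * x + b1) * deriv (fun t => t * p t) x
          - ((n : ℝ) * (b2 + ((n : ℝ) - 1) * a2) * x + b1) * (x * p x) = 0) →
      ∀ x : ℝ,
        (a2 * x ^ 2 + a1 * x) * deriv (deriv p) x
          + ((2 * a2 + b2) * x + 2 * a1 + b1) * deriv p x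
          - ((n : ℝ) - 1) * ((n : ℝ) * a2 + b2) * p x = 0) := by

  -- derivatives of y = x·p
  have d1 : deriv (fun t => t * p t) = fun x => p x + x * deriv p x := by
    funext x
    rw [deriv_fun_mul differentiable_fun_id.differentiableAt (hp x)]
    simp [mul_comm]
  have d2 : ∀ x, deriv (deriv (fun t => t * p t)) x
      = 2 * deriv p x + x * deriv (deriv p) x := by
    intro x
    rw [d1]
    rw [deriv_fun_add (g := fun y => y * deriv p y) (hp x) ((differentiable_fun_id.mul hp') x)]
    rw [deriv_fun_mul differentiable_fun_id.differentiableAt (hp' x)]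
    simp; ring
  have key : ∀ x : ℝ,
      x ^ 2 * (a2 * x + a1) * deriv (deriv (fun t => t * p t)) x
        + x * (b2 * x + b1) * deriv (fun t => t * p t) x
        - ((n : ℝ) * (b2 + ((n : ℝ) - 1) * a2) * x + b1) * (x * p x)
      = x ^ 2 * ((a2 * x ^ 2 + a1 * x) * deriv (deriv p) x
          + ((2 * a2 + b2) * x + 2 * a1 + b1) * deriv p x
          - ((n : ℝ) - 1) * ((n : ℝ) * a2 + b2) * p x) := by
    intro x
    rw [d2, d1]
    ring
  refine ⟨key, ?_, ?_, ?_⟩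
  · intro h x
    rw [key x, h x, mul_zero]
  · intro h x hx
    have := h x
    rw [key x] at this
    exact (mul_eq_zero.mp this).resolve_left (pow_ne_zero 2 hx)
  · intro hc h
    have heq : ∀ x : ℝ, x ≠ 0 →
        (a2 * x ^ 2 + a1 * x) * deriv (deriv p) x
          + ((2 * a2 + b2) * x + 2 * a1 + b1) * deriv p x
          - ((n : ℝ) - 1) * ((n : ℝ) * a2 + b2) * p x = 0 := by
      intro x hx
      have := h x
      rw [key x] at this
      exact (mul_eq_zero.mp this).resolve_left (pow_ne_zero 2 hx)
    have hF : Continuous (fun x : ℝ =>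
        (a2 * x ^ 2 + a1 * x) * deriv (deriv p) x
          + ((2 * a2 + b2) * x + 2 * a1 + b1) * deriv p x
          - ((n : ℝ) - 1) * ((n : ℝ) * a2 + b2) * p x) := by
      have := hp.continuous; have := hp'.continuous; fun_prop
    have := Continuous.ext_on (dense_compl_singleton (0:ℝ)) hF continuous_const
      (fun x hx => heq x hx)
    intro x
    exact congrFun this x
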